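/- Under the GBDT hypotheses (Π' = AΠq_1 + Πq_0, S' = Πq_1 j Π*, S invertible, X = Π*S⁻¹Π partitioned into h×h blocks X_{ij}), the block X_{22} satisfies the Riccati-type equation X_{22}' = -X_{12} - X_{22}² - X_{21}. -/

import Mathlib

open Matrix

section DerivHelp

attribute [local instance] Matrix.linftyOpNormedRing Matrix.linftyOpNormedAlgebra

variable {N : ℕ}

noncomputable def entryCLM (i p : Fin N) : Matrix (Fin N) (Fin N) ℂ →L[ℂ] ℂ :=
  LinearMap.toContinuousLinearMap
    { toFun := fun M => M i p
      map_add' := fun _ _ => rfl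
      map_smul' := fun _ _ => rfl }

noncomputable def ofCLM : ((Fin N) → (Fin N) → ℂ) →L[ℂ] Matrix (Fin N) (Fin N) ℂ :=
  LinearMap.toContinuousLinearMap
    { toFun := Matrix.of
      map_add' := fun _ _ => rfl
      map_smul' := fun _ _ => rfl }

theorem hasDerivAt_matrix {S : ℝ → Matrix (Fin N) (Fin N) ℂ} {D : Matrix (Fin N) (Fin N) ℂ}
    {x : ℝ} (h : ∀ i p, HasDerivAt (fun y => S y i p) (D i p) x) :
    HasDerivAt S D x := by
  have h1 : HasDerivAt (fun y => (fun i p => S y i p)) (fun i p => D i p) x :=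
    hasDerivAt_pi.mpr fun i => hasDerivAt_pi.mpr fun p => h i p
  exact ((ofCLM.restrictScalars ℝ).hasFDerivAt.comp_hasDerivAt x h1 :)

theorem hasDerivAt_inv_entry {S : ℝ → Matrix (Fin N) (Fin N) ℂ} {D : Matrix (Fin N) (Fin N) ℂ}
    {x : ℝ} (h : ∀ i p, HasDerivAt (fun y => S y i p) (D i p) x) (hS : IsUnit (S x)) :
    ∀ i p, HasDerivAt (fun y => (S y)⁻¹ i p)
      ((-((S x)⁻¹ * D * (S x)⁻¹)) i p) x := by
  have hm := hasDerivAt_matrix h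
  have hF := hasFDerivAt_ringInverse (𝕜 := ℂ) hS.unit
  rw [hS.unit_spec] at hF
  have hinv := (hF.restrictScalars ℝ).comp_hasDerivAt x hm
  have hval : ((-(ContinuousLinearMap.mulLeftRight ℂ _ (↑hS.unit⁻¹) (↑hS.unit⁻¹))).restrictScalars ℝ) D
      = -((S x)⁻¹ * D * (S x)⁻¹) := by
    have : ((hS.unit⁻¹ : (Matrix (Fin N) (Fin N) ℂ)ˣ) : Matrix (Fin N) (Fin N) ℂ)
        = (S x)⁻¹ := by
      rw [Matrix.coe_units_inv, hS.unit_spec]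
    simp [this]
  rw [hval] at hinv
  have hinv' : HasDerivAt (fun y => (S y)⁻¹) (-((S x)⁻¹ * D * (S x)⁻¹)) x := by
    simp only [Function.comp_def, Matrix.nonsing_inv_eq_ringInverse] at hinv ⊢
    exact hinv
  intro i p
  exact (((entryCLM i p).restrictScalars ℝ).hasFDerivAt.comp_hasDerivAt x hinv' :)

end DerivHelp

theorem entry_mul {a b c : Type*} [Fintype b] {F : ℝ → Matrix a b ℂ} {G : ℝ → Matrix b c ℂ}
    {F' : Matrix a b ℂ} {G' : Matrix b c ℂ} {x : ℝ}
    (hF : ∀ i p, HasDerivAt (fun y => F y i p) (F' i p) x)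
    (hG : ∀ i p, HasDerivAt (fun y => G y i p) (G' i p) x) :
    ∀ i p, HasDerivAt (fun y => (F y * G y) i p) ((F' * G x + F x * G') i p) x := by
  intro i p
  have h := HasDerivAt.fun_sum (u := Finset.univ)
    (fun k _ => ((hF i k).mul (hG k p)))
  convert h using 1
  · rfl
  all_goals simp [Matrix.mul_apply, Matrix.add_apply, Finset.sum_add_distrib]

theorem key2 {h : ℕ} (u : Matrix (Fin h) (Fin h) ℂ)
    (Xm Ym : Matrix (Fin h ⊕ Fin h) (Fin h ⊕ Fin h) ℂ) :
    ((Matrix.fromBlocks 0 0 1 0 : Matrix (Fin h ⊕ Fin h) (Fin h ⊕ Fin h) ℂ)ᴴ * Ym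
      + Ym * Matrix.fromBlocks 0 0 1 0
      + Xm * Matrix.fromBlocks 0 1 (-1) 0 * (Xm * Matrix.fromBlocks 0 0 1 0)
      - Xm * Matrix.fromBlocks 0 0 1 0 * (Matrix.fromBlocks 0 1 (-1) 0 * Xm)
      + (-(Matrix.fromBlocks 0 1 u 0))ᴴ * Xm + Xm * (-(Matrix.fromBlocks 0 1 u 0))).toBlocks₂₂
    = -(Xm.toBlocks₁₂) - Xm.toBlocks₂₂ ^ 2 - Xm.toBlocks₂₁ := by
  rw [← Matrix.fromBlocks_toBlocks Xm, ← Matrix.fromBlocks_toBlocks Ym]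
  set a := Xm.toBlocks₁₁; set b := Xm.toBlocks₁₂; set c := Xm.toBlocks₂₁; set d := Xm.toBlocks₂₂
  simp [Matrix.fromBlocks_multiply, Matrix.fromBlocks_conjTranspose, Matrix.fromBlocks_add,
    Matrix.fromBlocks_neg, sub_eq_add_neg]
  noncomm_ring

theorem reassoc {n : ℕ} {K : Type*} [Fintype K] [DecidableEq K]
    (P : Matrix (Fin n) K ℂ) (Si A : Matrix (Fin n) (Fin n) ℂ)
    (q1 q0 j : Matrix K K ℂ)
    (hSiA : Si * A = Aᴴ * Si + Si * (P * j * Pᴴ) * Si) :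
    (A * P * q1 + P * q0)ᴴ * (Si * P)
      + Pᴴ * ((-(Si * (P * q1 * j * Pᴴ) * Si)) * P + Si * (A * P * q1 + P * q0))
    = q1ᴴ * (Pᴴ * Aᴴ * Si * P) + (Pᴴ * Aᴴ * Si * P) * q1
      + (Pᴴ * Si * P) * j * ((Pᴴ * Si * P) * q1)
      - (Pᴴ * Si * P) * q1 * (j * (Pᴴ * Si * P))
      + q0ᴴ * (Pᴴ * Si * P) + (Pᴴ * Si * P) * q0 := by
  have hx : ∀ B : Matrix (Fin n) K ℂ,
      Si * (A * B) = Aᴴ * (Si * B) + Si * (P * (j * (Pᴴ * (Si * B)))) := by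
    intro B
    rw [← Matrix.mul_assoc, hSiA]
    simp only [Matrix.add_mul, Matrix.mul_assoc]
  simp only [conjTranspose_mul, conjTranspose_add, Matrix.mul_add, Matrix.add_mul,
    Matrix.neg_mul, Matrix.mul_neg, Matrix.mul_assoc, sub_eq_add_neg, hx]
  abel

/-- under the GBDT hypotheses, `X₂₂' = -X₁₂ - X₂₂² - X₂₁`,
where `X = Π* S⁻¹ Π` is partitioned into `h × h` blocks `X_{ij}`. -/
theorem stmt_7 (n h : ℕ)
    (A : Matrix (Fin n) (Fin n) ℂ)
    (u : ℝ → Matrix (Fin h) (Fin h) ℂ) (hu : ∀ x, (u x)ᴴ = u x)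
    (q1 j : Matrix (Fin h ⊕ Fin h) (Fin h ⊕ Fin h) ℂ)
    (q0 : ℝ → Matrix (Fin h ⊕ Fin h) (Fin h ⊕ Fin h) ℂ)
    (hq1 : q1 = Matrix.fromBlocks 0 0 1 0)
    (hq0 : ∀ x, q0 x = -(Matrix.fromBlocks 0 1 (u x) 0))
    (hj : j = Matrix.fromBlocks 0 1 (-1) 0)
    (Pi : ℝ → Matrix (Fin n) (Fin h ⊕ Fin h) ℂ)
    (S : ℝ → Matrix (Fin n) (Fin n) ℂ)
    (hPi : ∀ x i p, HasDerivAt (fun y => Pi y i p)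
      ((A * Pi x * q1 + Pi x * q0 x) i p) x)
    (hS : ∀ x i p, HasDerivAt (fun y => S y i p)
      ((Pi x * q1 * j * (Pi x)ᴴ) i p) x)
    (hSinv : ∀ x, IsUnit (S x))
    (hid : ∀ x, A * S x - S x * Aᴴ = Pi x * j * (Pi x)ᴴ)
    (X : ℝ → Matrix (Fin h ⊕ Fin h) (Fin h ⊕ Fin h) ℂ)
    (hX : ∀ x, X x = (Pi x)ᴴ * (S x)⁻¹ * Pi x) :
    ∀ x i p, HasDerivAt (fun y => (X y).toBlocks₂₂ i p)
      ((-(X x).toBlocks₁₂ - (X x).toBlocks₂₂ ^ 2 - (X x).toBlocks₂₁) i p)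
      x := by
  intro x i p
  have hdet : IsUnit (S x).det := (Matrix.isUnit_iff_isUnit_det _).mp (hSinv x)
  -- the identity for S⁻¹ * A
  have hSiA : (S x)⁻¹ * A = Aᴴ * (S x)⁻¹
      + (S x)⁻¹ * (Pi x * j * (Pi x)ᴴ) * (S x)⁻¹ := by
    rw [← hid x]
    have t1 : (S x)⁻¹ * (A * S x) * (S x)⁻¹ = (S x)⁻¹ * A := by
      rw [← Matrix.mul_assoc]
      exact Matrix.mul_nonsing_inv_cancel_right _ _ hdet
    have t2 : (S x)⁻¹ * (S x * Aᴴ) * (S x)⁻¹ = Aᴴ * (S x)⁻¹ := by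
      rw [Matrix.nonsing_inv_mul_cancel_left _ _ hdet]
    rw [Matrix.mul_sub, Matrix.sub_mul, t1, t2]
    abel
  -- derivative of Πᴴ entrywise
  have hPiH : ∀ i p, HasDerivAt (fun y => (Pi y)ᴴ i p)
      (((A * Pi x * q1 + Pi x * q0 x)ᴴ) i p) x := by
    intro i p
    simpa [Matrix.conjTranspose_apply] using (hPi x p i).star
  -- derivative of S⁻¹ entrywise
  have hSi := hasDerivAt_inv_entry (fun i p => hS x i p) (hSinv x)
  -- derivative of S⁻¹ * Π entrywise
  have hG := entry_mul hSi (hPi x)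
  -- derivative of Πᴴ * (S⁻¹ * Π) entrywise
  have hXd := entry_mul hPiH hG
  have hfun : (fun y => (X y).toBlocks₂₂ i p)
      = fun y => ((Pi y)ᴴ * ((S y)⁻¹ * Pi y)) (Sum.inr i) (Sum.inr p) := by
    funext y
    rw [hX y, Matrix.mul_assoc]
    rfl
  rw [hfun]
  have hD := hXd (Sum.inr i) (Sum.inr p)
  convert hD using 1
  rw [reassoc (Pi x) ((S x)⁻¹) A q1 (q0 x) j hSiA]
  have hkey : (q1ᴴ * ((Pi x)ᴴ * Aᴴ * (S x)⁻¹ * Pi x) + ((Pi x)ᴴ * Aᴴ * (S x)⁻¹ * Pi x) * q1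
      + ((Pi x)ᴴ * (S x)⁻¹ * Pi x) * j * (((Pi x)ᴴ * (S x)⁻¹ * Pi x) * q1)
      - ((Pi x)ᴴ * (S x)⁻¹ * Pi x) * q1 * (j * ((Pi x)ᴴ * (S x)⁻¹ * Pi x))
      + (q0 x)ᴴ * ((Pi x)ᴴ * (S x)⁻¹ * Pi x)
      + ((Pi x)ᴴ * (S x)⁻¹ * Pi x) * (q0 x)).toBlocks₂₂
      = -(((Pi x)ᴴ * (S x)⁻¹ * Pi x).toBlocks₁₂)
        - ((Pi x)ᴴ * (S x)⁻¹ * Pi x).toBlocks₂₂ ^ 2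
        - ((Pi x)ᴴ * (S x)⁻¹ * Pi x).toBlocks₂₁ := by
    rw [hq1, hj, hq0 x]
    exact key2 (u x) _ _
  rw [hX x]
  exact (Matrix.ext_iff.mpr hkey i p).symm
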